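/- Let A be an affine domain over a field k equipped with an admissible proper ℤ-filtration {A_n}, and let gr(A) = ⊕_n A_n/A_{n−1} be the associated graded domain. If φ is a non-trivial exponential map on A, then φ induces a non-trivial homogeneous exponential map φ̄ on gr(A) such that the image under the leading-form map ρ of A^φ is contained in gr(A)^{φ̄}. -/

import Mathlib

open Polynomial in
/-- `φ : A → A[U]` is an exponential map: evaluation of `U` at `0` is the identity,
and the coaction identity `φ_V φ_U = φ_{V+U}` holds. -/
def IsExpMap {k A : Type*} [CommSemiring k] [CommRing A] [Algebra k A]
    (φ : A →ₐ[k] Polynomial A) : Prop :=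
  (∀ a : A, (φ a).eval 0 = a) ∧
  (∀ a : A, (φ a).map φ.toRingHom =
      (φ a).eval₂ (C.comp (C : A →+* Polynomial A)) (X + C X))

open Polynomial in
/-- The ring of invariants of an exponential map. -/
def expInvariants {k A : Type*} [CommSemiring k] [CommRing A] [Algebra k A]
    (φ : A →ₐ[k] Polynomial A) : Set A := {a | φ a = C a}

/-- `(𝒜, ρ)` realizes the `k`-algebra `G` as the associated graded ring of the
filtration `F` on `A`: `ρ n : F n → G` is the leading-form map onto the `n`-th
graded piece `𝒜 n`, with kernel `F (n-1)`, compatible with multiplication and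
sending `1` to `1`. -/
structure IsAssociatedGraded {k A G : Type*} [CommRing k] [CommRing A] [Algebra k A]
    [CommRing G] [Algebra k G] (F : ℤ → Submodule k A) (𝒜 : ℤ → Submodule k G)
    (ρ : ∀ n : ℤ, F n →ₗ[k] G) : Prop where
  mem_piece : ∀ (n : ℤ) (a : F n), ρ n a ∈ 𝒜 n
  surjective : ∀ (n : ℤ), ∀ g ∈ 𝒜 n, ∃ a : F n, ρ n a = g
  ker : ∀ (n : ℤ) (a : F n), ρ n a = 0 ↔ (a : A) ∈ F (n - 1)
  map_mul : ∀ (p q : ℤ) (a : F p) (b : F q) (h : (a : A) * (b : A) ∈ F (p + q)),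
    ρ (p + q) ⟨(a : A) * (b : A), h⟩ = ρ p a * ρ q b
  map_one : ∀ h : (1 : A) ∈ F 0, ρ 0 ⟨1, h⟩ = 1

/-- The filtration `F` is a proper (exhaustive and separated) ℤ-filtration of the
`k`-algebra `A` by `k`-submodules. -/
structure IsProperFiltration {k A : Type*} [CommRing k] [CommRing A] [Algebra k A]
    (F : ℤ → Submodule k A) : Prop where
  mono : Monotone F
  one_mem : (1 : A) ∈ F 0
  mul_mem : ∀ {p q : ℤ} {a b : A}, a ∈ F p → b ∈ F q → a * b ∈ F (p + q)
  exhaustive : ∀ a : A, ∃ n, a ∈ F n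
  separated : ∀ a : A, (∀ n, a ∈ F n) → a = 0

/-- The filtration `F` is admissible: there is a finite generating set `s` of `A`
such that every element of `F n` is a polynomial in `s` all of whose monomials lie
in `F n`. -/
def IsAdmissibleFiltration {k A : Type*} [CommRing k] [CommRing A] [Algebra k A]
    (F : ℤ → Submodule k A) : Prop :=
  ∃ s : Finset A, Algebra.adjoin k (s : Set A) = ⊤ ∧
    ∀ (n : ℤ), ∀ a ∈ F n, ∃ p : MvPolynomial (s : Set A) k,
      MvPolynomial.aeval (R := k) (fun i : (s : Set A) => (i : A)) p = a ∧
      ∀ d ∈ p.support, (d.prod fun i e => (i : A) ^ e) ∈ F n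

namespace DHML
open Polynomial

section
variable {k A : Type*} [Field k] [CommRing A] [Algebra k A]

open Classical in
noncomputable def fdeg (F : ℤ → Submodule k A) (a : A) : ℤ :=
  if h : ∃ n : ℤ, a ∈ F n ∧ a ∉ F (n-1) then h.choose else 0

variable {F : ℤ → Submodule k A}

lemma exists_fdeg (hF : IsProperFiltration F) {a : A} (ha : a ≠ 0) :
    ∃ n : ℤ, a ∈ F n ∧ a ∉ F (n-1) := by
  classical
  obtain ⟨n₁, hn₁⟩ := hF.exhaustive a
  have hm : ∃ m, a ∉ F m := by
    by_contra h; push_neg at h; exact ha (hF.separated a h)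
  obtain ⟨m, hm⟩ := hm
  have hlt : m < n₁ := by
    by_contra h; push_neg at h; exact hm (hF.mono h hn₁)
  have hP : ∃ j : ℕ, a ∈ F (m + 1 + j) := by
    refine ⟨(n₁ - (m+1)).toNat, ?_⟩
    have : m + 1 + ((n₁ - (m+1)).toNat : ℤ) = n₁ := by
      rw [Int.toNat_of_nonneg (by omega)]; ring
    rw [this]; exact hn₁
  let j₀ := Nat.find hP
  refine ⟨m + 1 + j₀, Nat.find_spec hP, ?_⟩
  rcases Nat.eq_zero_or_pos j₀ with h0 | h0
  · have : m + 1 + (j₀:ℤ) - 1 = m := by simp [h0]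
    rw [this]; exact hm
  · intro hmem
    have := Nat.find_min hP (m := j₀ - 1) (by omega)
    apply this
    have : m + 1 + ((j₀ - 1 : ℕ) : ℤ) = m + 1 + (j₀:ℤ) - 1 := by
      push_cast [Nat.cast_sub h0]; ring
    rw [this]; exact hmem

lemma fdeg_mem (hF : IsProperFiltration F) {a : A} (ha : a ≠ 0) : a ∈ F (fdeg F a) := by
  classical
  rw [fdeg, dif_pos (exists_fdeg hF ha)]
  exact (exists_fdeg hF ha).choose_spec.1

lemma fdeg_not_mem (hF : IsProperFiltration F) {a : A} (ha : a ≠ 0) :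
    a ∉ F (fdeg F a - 1) := by
  classical
  rw [fdeg, dif_pos (exists_fdeg hF ha)]
  exact (exists_fdeg hF ha).choose_spec.2

lemma fdeg_le (hF : IsProperFiltration F) {a : A} (ha : a ≠ 0) {m : ℤ} (h : a ∈ F m) :
    fdeg F a ≤ m := by
  by_contra hc
  exact fdeg_not_mem hF ha (hF.mono (by omega) h)

lemma mem_of_fdeg_le (hF : IsProperFiltration F) {a : A} (ha : a ≠ 0) {m : ℤ}
    (h : fdeg F a ≤ m) : a ∈ F m := hF.mono h (fdeg_mem hF ha)

end
end DHML
set_option linter.unusedSectionVars false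
namespace DHML
open Polynomial

section
variable {k A G : Type*} [Field k] [CommRing A] [Nontrivial A] [Algebra k A]
  [CommRing G] [IsDomain G] [Algebra k G]
variable {F : ℤ → Submodule k A} {𝒜 : ℤ → Submodule k G} {ρ : ∀ n : ℤ, F n →ₗ[k] G}

/-- convenient form of the leading form map -/
noncomputable def rho (ρ : ∀ n : ℤ, F n →ₗ[k] G) (n : ℤ) (a : A) (h : a ∈ F n) : G :=
  ρ n ⟨a, h⟩

lemma rho_eq_zero_iff (hgr : IsAssociatedGraded F 𝒜 ρ) {n : ℤ} {a : A} (h : a ∈ F n) :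
    rho ρ n a h = 0 ↔ a ∈ F (n - 1) := hgr.ker n ⟨a, h⟩

lemma rho_add {n : ℤ} {a b : A} (ha : a ∈ F n) (hb : b ∈ F n) (hab : a + b ∈ F n) :
    rho ρ n (a + b) hab = rho ρ n a ha + rho ρ n b hb := by
  rw [rho, rho, rho, ← map_add]; rfl

lemma rho_smul {n : ℤ} {a : A} (c : k) (ha : a ∈ F n) (h : c • a ∈ F n) :
    rho ρ n (c • a) h = c • rho ρ n a ha := by
  rw [rho, rho, ← map_smul]; rfl

lemma rho_zero (n : ℤ) (h : (0:A) ∈ F n) : rho ρ n 0 h = 0 := by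
  rw [rho]
  have : (⟨0, h⟩ : F n) = 0 := rfl
  rw [this, map_zero]

lemma rho_congr {n : ℤ} {a b : A} (e : a = b) (ha : a ∈ F n) :
    rho ρ n a ha = rho ρ n b (e ▸ ha) := by subst e; rfl

lemma rho_sub_eq_zero (hgr : IsAssociatedGraded F 𝒜 ρ) {n : ℤ} {a b : A}
    (ha : a ∈ F n) (hb : b ∈ F n) (h : a - b ∈ F (n-1)) :
    rho ρ n a ha = rho ρ n b hb := by
  have hmem : a - b ∈ F n := by
    have := sub_mem ha hb; exact this
  have h0 : rho ρ n (a - b) hmem = 0 := (rho_eq_zero_iff hgr hmem).2 h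
  have : rho ρ n (a-b) hmem = rho ρ n a ha - rho ρ n b hb := by
    rw [rho, rho, rho, ← map_sub]; rfl
  rw [this] at h0; exact sub_eq_zero.mp h0

lemma rho_nsmul {n : ℤ} (m : ℕ) {a : A} (ha : a ∈ F n) (h : m • a ∈ F n) :
    rho ρ n (m • a) h = m • rho ρ n a ha := by
  rw [rho, rho]
  have : (⟨m • a, h⟩ : F n) = m • ⟨a, ha⟩ := rfl
  rw [this, map_nsmul]

lemma rho_mul (hgr : IsAssociatedGraded F 𝒜 ρ) {p q : ℤ} {a b : A}
    (ha : a ∈ F p) (hb : b ∈ F q) (h : a * b ∈ F (p + q)) :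
    rho ρ (p+q) (a*b) h = rho ρ p a ha * rho ρ q b hb := hgr.map_mul p q ⟨a, ha⟩ ⟨b, hb⟩ h

lemma fdeg_one (hF : IsProperFiltration F) (hgr : IsAssociatedGraded F 𝒜 ρ) :
    fdeg F (1 : A) = 0 := by
  have h1 : (1:A) ≠ 0 := one_ne_zero
  refine le_antisymm (fdeg_le hF h1 hF.one_mem) ?_
  by_contra hc
  push_neg at hc
  have hlow : (1:A) ∈ F (0 - 1) := hF.mono (by omega) (fdeg_mem hF h1)
  have := (rho_eq_zero_iff hgr hF.one_mem).2 hlow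
  rw [rho, hgr.map_one] at this
  exact one_ne_zero this

lemma fdeg_mul (hF : IsProperFiltration F) (hgr : IsAssociatedGraded F 𝒜 ρ)
    {a b : A} (ha : a ≠ 0) (hb : b ≠ 0) (hab : a * b ≠ 0) :
    fdeg F (a * b) = fdeg F a + fdeg F b := by
  have hmem : a * b ∈ F (fdeg F a + fdeg F b) :=
    hF.mul_mem (fdeg_mem hF ha) (fdeg_mem hF hb)
  refine le_antisymm (fdeg_le hF hab hmem) ?_
  by_contra hc
  push_neg at hc
  have hlow : a * b ∈ F (fdeg F a + fdeg F b - 1) :=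
    hF.mono (by omega) (fdeg_mem hF hab)
  have h0 : rho ρ (fdeg F a + fdeg F b) (a*b) hmem = 0 :=
    (rho_eq_zero_iff hgr hmem).2 hlow
  rw [rho_mul hgr (fdeg_mem hF ha) (fdeg_mem hF hb)] at h0
  rcases mul_eq_zero.mp h0 with h | h
  · exact (rho_eq_zero_iff hgr _).1 h |> fdeg_not_mem hF ha
  · exact (rho_eq_zero_iff hgr _).1 h |> fdeg_not_mem hF hb

end
end DHML
namespace DHML

/-- weighted degree shift: `⌊e·i/q⌋` implemented with integer division. -/
def cdeg (e : ℤ) (q : ℕ) (i : ℕ) : ℤ := e * i / q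

section arith
variable {e : ℤ} {q : ℕ} (hq : 0 < q)

lemma cdeg_zero (e : ℤ) (q : ℕ) : cdeg e q 0 = 0 := by simp [cdeg]

include hq

lemma le_cdeg {Δ : ℤ} {i : ℕ} (h : Δ * q ≤ e * i) : Δ ≤ cdeg e q i :=
  (Int.le_ediv_iff_mul_le (by exact_mod_cast hq)).2 h

lemma cdeg_superadd (u v : ℕ) : cdeg e q u + cdeg e q v ≤ cdeg e q (u + v) := by
  have hQ : (0:ℤ) < (q:ℤ) := by exact_mod_cast hq
  apply le_cdeg hq
  have h1 : (e * u / q) * q ≤ e * u := Int.ediv_mul_le _ (by omega)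
  have h2 : (e * v / q) * q ≤ e * v := Int.ediv_mul_le _ (by omega)
  rw [cdeg, cdeg]
  push_cast
  push_cast at h1 h2
  nlinarith [h1, h2]

lemma cdeg_exact (m : ℕ) : cdeg e q (q * m) = e * m := by
  have hQ : ((q:ℤ)) ≠ 0 := by exact_mod_cast hq.ne'
  rw [cdeg]
  push_cast
  rw [show e * ((q:ℤ) * m) = (q:ℤ) * (e * m) by ring, Int.mul_ediv_cancel_left _ hQ]

lemma not_dvd_emul (hcop : e.natAbs.Coprime q) {u : ℕ} (hu : ¬ q ∣ u) :
    ¬ ((q:ℤ) ∣ e * u) := by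
  intro h
  have : q ∣ (e * u).natAbs := Int.natAbs_dvd_natAbs.2 h
  rw [Int.natAbs_mul, Int.natAbs_natCast] at this
  exact hu (Nat.Coprime.dvd_of_dvd_mul_left (Nat.Coprime.symm hcop) this)

lemma cdeg_strict (hcop : e.natAbs.Coprime q) {u v : ℕ} (hu : ¬ q ∣ u)
    (hsum : q ∣ u + v) : cdeg e q u + cdeg e q v ≤ cdeg e q (u + v) - 1 := by
  have hQ : (0:ℤ) < (q:ℤ) := by exact_mod_cast hq
  obtain ⟨s, hs⟩ := hsum
  have hv : ¬ q ∣ v := by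
    intro h
    have huv : q ∣ u + v := ⟨s, hs⟩
    exact hu ((Nat.dvd_add_iff_left h).mpr huv)
  have key : ∀ w : ℕ, ¬ q ∣ w → 1 ≤ (e * w) % q ∧ (e * w) % q < q ∧
      e * w = q * (e * w / q) + (e * w) % q := by
    intro w hw
    refine ⟨?_, Int.emod_lt_of_pos _ hQ, (Int.mul_ediv_add_emod _ _).symm⟩
    have hQne : ((q:ℤ)) ≠ 0 := by positivity
    rcases (Int.emod_nonneg (e*w) hQne).lt_or_eq with h | h
    · linarith [h]
    · exact absurd (Int.dvd_of_emod_eq_zero h.symm) (not_dvd_emul hq hcop hw)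
  obtain ⟨h1u, h2u, h3u⟩ := key u hu
  obtain ⟨h1v, h2v, h3v⟩ := key v hv
  set x := cdeg e q u with hxdef
  set y := cdeg e q v with hydef
  set r1 := (e * (u:ℤ)) % q with hr1def
  set r2 := (e * (v:ℤ)) % q with hr2def
  have hxe : e * (u:ℤ) = q * x + r1 := by rw [hxdef, cdeg]; exact h3u
  have hye : e * (v:ℤ) = q * y + r2 := by rw [hydef, cdeg]; exact h3v
  have hsumQ : e * ((u:ℤ) + v) = (q:ℤ) * (e * s) := by
    have h' : ((u:ℤ) + v) = (q:ℤ) * s := by exact_mod_cast congrArg (Nat.cast : ℕ → ℤ) hs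
    rw [h']; ring
  have hcd : cdeg e q (u + v) = e * s := by
    rw [cdeg]
    push_cast
    rw [hsumQ, Int.mul_ediv_cancel_left _ (by omega)]
  have hrr : r1 + r2 = q := by
    have hdvd : (q:ℤ) ∣ (r1 + r2) := by
      have heq : r1 + r2 = (q:ℤ) * (e*s) - (q:ℤ) * x - q * y := by linarith [hxe, hye, hsumQ]
      rw [heq]
      exact dvd_sub (dvd_sub (Dvd.intro _ rfl) (Dvd.intro _ rfl)) (Dvd.intro _ rfl)
    obtain ⟨t, ht⟩ := hdvd
    have hpos : 0 < (q:ℤ) * t := by rw [← ht]; linarith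
    have hlt2 : (q:ℤ) * t < 2 * q := by rw [← ht]; linarith
    have ht1 : 1 ≤ t := by nlinarith
    have ht2 : t ≤ 1 := by nlinarith
    have : t = 1 := le_antisymm ht2 ht1
    rw [this, mul_one] at ht
    exact ht.symm ▸ ht
  have hfin : (q:ℤ) * (x + y) = (q:ℤ) * (e * s - 1) := by linarith [hxe, hye, hsumQ, hrr]
  have := mul_left_cancel₀ (by omega : (q:ℤ) ≠ 0) hfin
  rw [hcd]
  linarith [this]

end arith
end DHML
set_option linter.unusedSectionVars false
namespace DHML
open Polynomial

section
variable {k A : Type*} [Field k] [CommRing A] [Algebra k A]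

lemma coeff_coeff_eval₂ {R : Type*} [CommRing R] (p : Polynomial R) (j m : ℕ) :
    ((p.eval₂ ((C : Polynomial R →+* Polynomial (Polynomial R)).comp
      (C : R →+* Polynomial R)) (X + C X)).coeff j).coeff m
      = (j+m).choose j • p.coeff (j+m) := by
  induction p using Polynomial.induction_on' with
  | add p q hp hq =>
    rw [eval₂_add, coeff_add, coeff_add, hp, hq, coeff_add, smul_add]
  | monomial i a =>
    rw [eval₂_monomial, coeff_monomial]
    have h1 : (((C : Polynomial R →+* Polynomial (Polynomial R)).comp
        (C : R →+* Polynomial R)) a * (X + C X) ^ i).coeff j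
        = C a * (X ^ (i - j) * (i.choose j : Polynomial R)) := by
      rw [RingHom.comp_apply, coeff_C_mul, coeff_X_add_C_pow]
    rw [h1, coeff_C_mul, coeff_mul_natCast, coeff_X_pow]
    by_cases hij : i = j + m
    · subst hij
      have hmm : (m = (j + m) - j) = True := by simp
      simp only [hmm, if_true, if_pos rfl, one_mul, nsmul_eq_mul]
      ring
    · by_cases hj : j ≤ i
      · have hm : ¬ (m = i - j) := by omega
        simp [hm, hij]
      · have hc : (i.choose j) = 0 := Nat.choose_eq_zero_of_lt (by omega)
        simp [hc, hij]

lemma coact_coeff (φ : A →ₐ[k] Polynomial A) (hφ : IsExpMap φ) (a : A) (j m : ℕ) :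
    (φ ((φ a).coeff j)).coeff m = (j+m).choose j • (φ a).coeff (j+m) := by
  have h2 := hφ.2 a
  have hL : (φ ((φ a).coeff j)).coeff m
      = (((φ a).map φ.toRingHom).coeff j).coeff m := by
    rw [coeff_map]; rfl
  rw [hL, h2]
  exact coeff_coeff_eval₂ (φ a) j m

end
end DHML
set_option linter.unusedSectionVars false
set_option maxHeartbeats 1000000
namespace DHML
open Polynomial

section
variable {k A G : Type*} [Field k] [CommRing A] [IsDomain A] [Algebra k A]
  [CommRing G] [IsDomain G] [Algebra k G]
variable {F : ℤ → Submodule k A} {𝒜 : ℤ → Submodule k G} {ρ : ∀ n : ℤ, F n →ₗ[k] G}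

/-- all coefficients of `P` obey the weighted filtration bound based at `n`. -/
def Good (F : ℤ → Submodule k A) (c : ℕ → ℤ) (n : ℤ) (P : Polynomial A) : Prop :=
  ∀ i, P.coeff i ∈ F (n + c i)

section good
variable {c : ℕ → ℤ} (hF : IsProperFiltration F)
  (hc0 : c 0 = 0) (hcsuper : ∀ u v, c u + c v ≤ c (u + v))
include hF hc0 hcsuper

lemma good_mono {n n' : ℤ} (h : n ≤ n') {P : Polynomial A} (hP : Good F c n P) :
    Good F c n' P := fun i => hF.mono (by omega) (hP i)

lemma good_zero (n : ℤ) : Good F c n 0 := fun i => by simp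

lemma good_add {n : ℤ} {P Q : Polynomial A} (hP : Good F c n P) (hQ : Good F c n Q) :
    Good F c n (P + Q) := fun i => by rw [coeff_add]; exact add_mem (hP i) (hQ i)

lemma good_sum {ι : Type*} {t : Finset ι} {n : ℤ} {P : ι → Polynomial A}
    (h : ∀ i ∈ t, Good F c n (P i)) : Good F c n (∑ i ∈ t, P i) := fun j => by
  rw [finset_sum_coeff]
  exact Submodule.sum_mem _ fun i hi => h i hi j

lemma good_smul {n : ℤ} (a : k) {P : Polynomial A} (hP : Good F c n P) :
    Good F c n (a • P) := fun i => by
  rw [coeff_smul]; exact Submodule.smul_mem _ _ (hP i)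

lemma good_mul {n m : ℤ} {P Q : Polynomial A} (hP : Good F c n P) (hQ : Good F c m Q) :
    Good F c (n + m) (P * Q) := by
  intro i
  rw [coeff_mul]
  refine Submodule.sum_mem _ fun x hx => ?_
  have hxx := Finset.HasAntidiagonal.mem_antidiagonal.mp hx
  have h1 := hF.mul_mem (hP x.1) (hQ x.2)
  refine hF.mono ?_ h1
  have := hcsuper x.1 x.2
  rw [hxx] at this
  omega

lemma good_one : Good F c 0 1 := by
  intro i
  rcases Nat.eq_zero_or_pos i with h | h
  · subst h; rw [hc0]; simpa using hF.one_mem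
  · rw [coeff_one, if_neg (by omega)]; simp

lemma good_pow {n : ℤ} {P : Polynomial A} (hP : Good F c n P) (t : ℕ) :
    Good F c (t * n) (P ^ t) := by
  induction t with
  | zero => simpa using good_one hF hc0 hcsuper
  | succ t ih =>
    have := good_mul hF hc0 hcsuper ih hP
    rw [pow_succ]
    have heq : ((t:ℤ) + 1) * n = (t:ℤ) * n + n := by ring
    rw [show ((t + 1 : ℕ) : ℤ) * n = (t:ℤ) * n + n by push_cast; ring]
    exact this

lemma good_prod {ι : Type*} (t : Finset ι) (ν : ι → ℤ) (P : ι → Polynomial A)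
    (h : ∀ i ∈ t, Good F c (ν i) (P i)) :
    Good F c (∑ i ∈ t, ν i) (∏ i ∈ t, P i) := by
  classical
  induction t using Finset.cons_induction with
  | empty => simpa using good_one hF hc0 hcsuper
  | cons j t hj ih =>
    rw [Finset.sum_cons, Finset.prod_cons]
    exact good_mul hF hc0 hcsuper (h j (Finset.mem_cons_self j t))
      (ih fun i hi => h i (Finset.mem_cons_of_mem hi))

end good

lemma fdeg_pow (hF : IsProperFiltration F) (hgr : IsAssociatedGraded F 𝒜 ρ)
    {x : A} (hx : x ≠ 0) (t : ℕ) : x ^ t ≠ 0 ∧ fdeg F (x ^ t) = t * fdeg F x := by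
  induction t with
  | zero => refine ⟨by simp, ?_⟩; simp [fdeg_one hF hgr]
  | succ t ih =>
    have hne : x ^ (t+1) ≠ 0 := pow_ne_zero _ hx
    refine ⟨hne, ?_⟩
    rw [pow_succ, fdeg_mul hF hgr ih.1 hx (by rw [← pow_succ]; exact hne), ih.2]
    push_cast; ring

lemma fdeg_prod (hF : IsProperFiltration F) (hgr : IsAssociatedGraded F 𝒜 ρ)
    {ι : Type*} (t : Finset ι) (x : ι → A) (h : ∀ i ∈ t, x i ≠ 0) :
    (∏ i ∈ t, x i) ≠ 0 ∧ fdeg F (∏ i ∈ t, x i) = ∑ i ∈ t, fdeg F (x i) := by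
  classical
  induction t using Finset.cons_induction with
  | empty => refine ⟨by simp, by simpa using fdeg_one hF hgr⟩
  | cons j t hj ih =>
    have hxj := h j (Finset.mem_cons_self j t)
    obtain ⟨hne, hdeg⟩ := ih (fun i hi => h i (Finset.mem_cons_of_mem hi))
    rw [Finset.prod_cons, Finset.sum_cons]
    refine ⟨mul_ne_zero hxj hne, ?_⟩
    rw [fdeg_mul hF hgr hxj hne (mul_ne_zero hxj hne), hdeg]

end
end DHML
set_option linter.unusedSectionVars false
set_option maxHeartbeats 1000000
namespace DHML
open Polynomial

section
variable {k A G : Type*} [Field k] [CommRing A] [IsDomain A] [Algebra k A]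
  [CommRing G] [IsDomain G] [Algebra k G]
variable {F : ℤ → Submodule k A} {𝒜 : ℤ → Submodule k G} {ρ : ∀ n : ℤ, F n →ₗ[k] G}

lemma good_main (hF : IsProperFiltration F) (hgr : IsAssociatedGraded F 𝒜 ρ)
    (φ : A →ₐ[k] Polynomial A) {c : ℕ → ℤ}
    (hc0 : c 0 = 0) (hcsuper : ∀ u v, c u + c v ≤ c (u + v))
    (s : Finset A)
    (hadm2 : ∀ (n : ℤ), ∀ a ∈ F n, ∃ p : MvPolynomial (s : Set A) k,
      MvPolynomial.aeval (R := k) (fun i : (s : Set A) => (i : A)) p = a ∧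
      ∀ d ∈ p.support, (d.prod fun i e => (i : A) ^ e) ∈ F n)
    (hgen : ∀ g : (s : Set A), (g : A) ≠ 0 → Good F c (fdeg F (g : A)) (φ (g : A)))
    {n : ℤ} {a : A} (ha : a ∈ F n) : Good F c n (φ a) := by
  classical
  obtain ⟨p, hp1, hp2⟩ := hadm2 n a ha
  rw [← hp1, MvPolynomial.as_sum p, map_sum, map_sum]
  apply good_sum hF hc0 hcsuper
  intro d hd
  rw [MvPolynomial.aeval_monomial, map_mul, φ.commutes, ← Algebra.smul_def]
  apply good_smul hF hc0 hcsuper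
  by_cases hz : ∀ i ∈ d.support, (i : A) ≠ 0
  · have hφprod : φ (d.prod fun i e => (i : A) ^ e)
        = ∏ i ∈ d.support, (φ (i : A)) ^ (d i) := by
      rw [Finsupp.prod, map_prod]
      exact Finset.prod_congr rfl fun i _ => map_pow φ _ _
    rw [hφprod]
    have hgood : Good F c (∑ i ∈ d.support, (d i : ℤ) * fdeg F (i : A))
        (∏ i ∈ d.support, (φ (i : A)) ^ (d i)) := by
      apply good_prod hF hc0 hcsuper
      intro i hi
      exact good_pow hF hc0 hcsuper (hgen i (hz i hi)) (d i)
    have hfde : (∏ i ∈ d.support, ((i : A) ^ (d i))) ≠ 0 ∧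
        fdeg F (∏ i ∈ d.support, ((i : A) ^ (d i)))
          = ∑ i ∈ d.support, fdeg F ((i : A) ^ (d i)) :=
      fdeg_prod hF hgr _ _ (fun i hi => (fdeg_pow hF hgr (hz i hi) (d i)).1)
    have hsum_eq : ∑ i ∈ d.support, fdeg F ((i : A) ^ (d i))
        = ∑ i ∈ d.support, (d i : ℤ) * fdeg F (i : A) :=
      Finset.sum_congr rfl fun i hi => (fdeg_pow hF hgr (hz i hi) (d i)).2
    have hle : (∑ i ∈ d.support, (d i : ℤ) * fdeg F (i : A)) ≤ n := by
      have hmem := hp2 d hd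
      rw [Finsupp.prod] at hmem
      have := fdeg_le hF hfde.1 hmem
      linarith [this, hfde.2, hsum_eq]
    exact good_mono hF hc0 hcsuper hle hgood
  · push_neg at hz
    obtain ⟨i₀, hi₀, hz0⟩ := hz
    have hzero : (d.prod fun i e => (i : A) ^ e) = 0 := by
      rw [Finsupp.prod]
      apply Finset.prod_eq_zero hi₀
      rw [hz0]
      exact zero_pow (Finsupp.mem_support_iff.mp hi₀)
    rw [hzero, map_zero]
    exact good_zero hF hc0 hcsuper n

end
end DHML
set_option linter.unusedSectionVars false
set_option maxHeartbeats 1000000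
namespace DHML
open Polynomial

section
variable {k A G : Type*} [Field k] [CommRing A] [IsDomain A] [Algebra k A]
  [CommRing G] [IsDomain G] [Algebra k G]
variable {F : ℤ → Submodule k A} {𝒜 : ℤ → Submodule k G} {ρ : ∀ n : ℤ, F n →ₗ[k] G}

open Classical in
/-- leading-form coefficient of `φ a` at graded level `n`, slot `m`. -/
noncomputable def lfc (ρ : ∀ n : ℤ, F n →ₗ[k] G) (φ : A →ₐ[k] Polynomial A)
    (e : ℤ) (q : ℕ) (n : ℤ) (a : A) (m : ℕ) : G :=
  if h : (φ a).coeff (q * m) ∈ F (n + e * m) then rho ρ (n + e * m) _ h else 0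

/-- the leading form of `φ a` in `G[U]`. -/
noncomputable def LF (ρ : ∀ n : ℤ, F n →ₗ[k] G) (φ : A →ₐ[k] Polynomial A)
    (e : ℤ) (q : ℕ) (n : ℤ) (a : A) : Polynomial G :=
  ∑ m ∈ Finset.range ((φ a).natDegree + 1), monomial m (lfc ρ φ e q n a m)

variable (hF : IsProperFiltration F) (hgr : IsAssociatedGraded F 𝒜 ρ)
  (φ : A →ₐ[k] Polynomial A) (e : ℤ) (q : ℕ) (hq : 0 < q)
  (hcop : e.natAbs.Coprime q)
  (hgood : ∀ (n : ℤ) (a : A), a ∈ F n → Good F (cdeg e q) n (φ a))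

include hgr in
lemma lfc_mem (n : ℤ) (a : A) (m : ℕ) : lfc ρ φ e q n a m ∈ 𝒜 (n + e * m) := by
  rw [lfc]
  split
  · exact hgr.mem_piece _ _
  · exact zero_mem _

include hq

lemma lfc_eq_zero_of_big {n : ℤ} {a : A} {m : ℕ} (h : (φ a).natDegree < q * m) :
    lfc ρ φ e q n a m = 0 := by
  have hc : (φ a).coeff (q * m) = 0 := coeff_eq_zero_of_natDegree_lt h
  rw [lfc]
  split
  · next hmem => rw [rho_congr hc hmem]; exact rho_zero _ _
  · rfl

lemma LF_coeff (n : ℤ) (a : A) (m : ℕ) :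
    (LF ρ φ e q n a).coeff m = lfc ρ φ e q n a m := by
  rw [LF, finset_sum_coeff]
  by_cases hm : m ∈ Finset.range ((φ a).natDegree + 1)
  · rw [Finset.sum_eq_single m]
    · rw [coeff_monomial, if_pos rfl]
    · intro b _ hb; rw [coeff_monomial, if_neg hb]
    · intro h; exact absurd hm h
  · have : ∀ b ∈ Finset.range ((φ a).natDegree + 1), (monomial b (lfc ρ φ e q n a b)).coeff m = 0 := by
      intro b hb
      rw [coeff_monomial, if_neg]
      intro hbm
      subst hbm
      exact hm hb
    rw [Finset.sum_eq_zero this]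
    refine (lfc_eq_zero_of_big φ e q hq ?_).symm
    simp only [Finset.mem_range, not_lt] at hm
    calc (φ a).natDegree < m := by omega
    _ ≤ q * m := Nat.le_mul_of_pos_left m hq

include hgood hgr hF

lemma lfc_spec {n : ℤ} {a : A} (ha : a ∈ F n) (m : ℕ) :
    ∃ h : (φ a).coeff (q * m) ∈ F (n + e * m),
      lfc ρ φ e q n a m = rho ρ (n + e * m) _ h := by
  have hmem : (φ a).coeff (q * m) ∈ F (n + e * m) := by
    have := hgood n a ha (q * m)
    rwa [cdeg_exact hq] at this
  exact ⟨hmem, by rw [lfc, dif_pos hmem]⟩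

lemma lfc_sub_zero {n : ℤ} {a a' : A} (ha : a ∈ F n) (ha' : a' ∈ F n)
    (hd : a - a' ∈ F (n - 1)) (m : ℕ) :
    lfc ρ φ e q n a m = lfc ρ φ e q n a' m := by
  obtain ⟨h1, e1⟩ := lfc_spec hF hgr φ e q hq hgood ha m
  obtain ⟨h2, e2⟩ := lfc_spec hF hgr φ e q hq hgood ha' m
  rw [e1, e2]
  apply rho_sub_eq_zero hgr
  have : (φ a).coeff (q*m) - (φ a').coeff (q*m) = (φ (a - a')).coeff (q*m) := by
    rw [map_sub, coeff_sub]
  rw [this]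
  have := hgood (n-1) (a - a') hd (q * m)
  rw [cdeg_exact hq] at this
  refine hF.mono (by omega) this

lemma LF_congr {n : ℤ} {a a' : A} (ha : a ∈ F n) (ha' : a' ∈ F n)
    (h : rho ρ n a ha = rho ρ n a' ha') :
    LF ρ φ e q n a = LF ρ φ e q n a' := by
  ext m
  rw [LF_coeff φ e q hq, LF_coeff φ e q hq]
  apply lfc_sub_zero hF hgr φ e q hq hgood ha ha'
  exact (rho_eq_zero_iff hgr (sub_mem ha ha')).mp
    (by rw [show rho ρ n (a - a') (sub_mem ha ha') = rho ρ n a ha - rho ρ n a' ha' from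
          by rw [rho, rho, rho, ← map_sub]; rfl, h, sub_self])

lemma LF_add {n : ℤ} {a a' : A} (ha : a ∈ F n) (ha' : a' ∈ F n) :
    LF ρ φ e q n (a + a') = LF ρ φ e q n a + LF ρ φ e q n a' := by
  ext m
  rw [coeff_add, LF_coeff φ e q hq, LF_coeff φ e q hq, LF_coeff φ e q hq]
  obtain ⟨h1, e1⟩ := lfc_spec hF hgr φ e q hq hgood (add_mem ha ha') m
  obtain ⟨h2, e2⟩ := lfc_spec hF hgr φ e q hq hgood ha m
  obtain ⟨h3, e3⟩ := lfc_spec hF hgr φ e q hq hgood ha' m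
  rw [e1, e2, e3]
  have hcoeff : (φ (a + a')).coeff (q*m) = (φ a).coeff (q*m) + (φ a').coeff (q*m) := by
    rw [map_add, coeff_add]
  rw [rho_congr hcoeff h1]
  exact rho_add h2 h3 _

lemma LF_smul {n : ℤ} (t : k) {a : A} (ha : a ∈ F n) :
    LF ρ φ e q n (t • a) = t • LF ρ φ e q n a := by
  ext m
  rw [coeff_smul, LF_coeff φ e q hq, LF_coeff φ e q hq]
  obtain ⟨h1, e1⟩ := lfc_spec hF hgr φ e q hq hgood (Submodule.smul_mem _ t ha) m
  obtain ⟨h2, e2⟩ := lfc_spec hF hgr φ e q hq hgood ha m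
  rw [e1, e2]
  have hcoeff : (φ (t • a)).coeff (q*m) = t • ((φ a).coeff (q*m)) := by
    rw [map_smul, coeff_smul]
  rw [rho_congr hcoeff h1]
  exact rho_smul t h2 _

end
end DHML
set_option linter.unusedSectionVars false
set_option maxHeartbeats 1000000
namespace DHML
open Polynomial

section
variable {k A G : Type*} [Field k] [CommRing A] [IsDomain A] [Algebra k A]
  [CommRing G] [IsDomain G] [Algebra k G]
variable {F : ℤ → Submodule k A} {𝒜 : ℤ → Submodule k G} {ρ : ∀ n : ℤ, F n →ₗ[k] G}

lemma rho_level_congr {n n' : ℤ} (h : n = n') {a : A} (ha : a ∈ F n) :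
    rho ρ n a ha = rho ρ n' a (h ▸ ha) := by subst h; rfl

lemma rho_sum {ι : Type*} (t : Finset ι) (f : ι → A) {n : ℤ} (hf : ∀ x ∈ t, f x ∈ F n)
    (h : (∑ x ∈ t, f x) ∈ F n) :
    rho ρ n (∑ x ∈ t, f x) h = ∑ x ∈ t.attach, rho ρ n (f x.1) (hf x.1 x.2) := by
  have hs : (⟨∑ x ∈ t, f x, h⟩ : F n) = ∑ x ∈ t.attach, (⟨f x.1, hf x.1 x.2⟩ : F n) := by
    apply Subtype.ext
    push_cast
    rw [← Finset.sum_attach t f]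
  rw [rho, hs, map_sum]
  rfl

variable (hF : IsProperFiltration F) (hgr : IsAssociatedGraded F 𝒜 ρ)
  (φ : A →ₐ[k] Polynomial A) (e : ℤ) (q : ℕ) (hq : 0 < q)
  (hcop : e.natAbs.Coprime q)
  (hgood : ∀ (n : ℤ) (a : A), a ∈ F n → Good F (cdeg e q) n (φ a))

include hF hgr hq hcop hgood

lemma LF_mul {m n : ℤ} {a b : A} (ha : a ∈ F m) (hb : b ∈ F n) :
    LF ρ φ e q (m + n) (a * b) = LF ρ φ e q m a * LF ρ φ e q n b := by
  classical
  ext i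
  rw [coeff_mul, LF_coeff φ e q hq]
  obtain ⟨hmem, hL⟩ := lfc_spec hF hgr φ e q hq hgood (hF.mul_mem ha hb) i
  rw [hL]
  have hexp : (φ (a * b)).coeff (q * i) =
      ∑ x ∈ Finset.HasAntidiagonal.antidiagonal (q * i), (φ a).coeff x.1 * (φ b).coeff x.2 := by
    rw [map_mul, coeff_mul]
  have hterm : ∀ x ∈ Finset.HasAntidiagonal.antidiagonal (q * i),
      (φ a).coeff x.1 * (φ b).coeff x.2 ∈ F (m + n + e * i) := by
    intro x hx
    have hxx := Finset.HasAntidiagonal.mem_antidiagonal.mp hx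
    have h1 := hgood m a ha x.1
    have h2 := hgood n b hb x.2
    have h3 := hF.mul_mem h1 h2
    refine hF.mono ?_ h3
    have h4 := cdeg_superadd hq (e := e) x.1 x.2
    rw [hxx, cdeg_exact hq] at h4
    omega
  rw [rho_congr hexp hmem,
    rho_sum (ρ := ρ) (Finset.HasAntidiagonal.antidiagonal (q*i)) _ hterm (hexp ▸ hmem)]
  -- replace each term by a proof-free value
  have hval : ∀ x : {x // x ∈ Finset.HasAntidiagonal.antidiagonal (q * i)},
      rho ρ (m + n + e * i) ((φ a).coeff x.1.1 * (φ b).coeff x.1.2) (hterm x.1 x.2)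
      = if q ∣ x.1.1 then lfc ρ φ e q m a (x.1.1 / q) * lfc ρ φ e q n b (x.1.2 / q)
        else 0 := by
    rintro ⟨⟨u, v⟩, hx⟩
    have hxx := Finset.HasAntidiagonal.mem_antidiagonal.mp hx
    simp only at hxx ⊢
    by_cases hdvd : q ∣ u
    · rw [if_pos hdvd]
      obtain ⟨j, hj⟩ := hdvd
      have hdvd2 : q ∣ v := by
        have h' : q ∣ u + v := ⟨i, hxx⟩
        exact (Nat.dvd_add_iff_right ⟨j, hj⟩).mpr h'
      obtain ⟨j', hj'⟩ := hdvd2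
      subst hj
      subst hj'
      have hju : q * j / q = j := Nat.mul_div_cancel_left _ hq
      have hjv : q * j' / q = j' := Nat.mul_div_cancel_left _ hq
      have hii : j + j' = i := by
        have h2 : q * (j + j') = q * i := by rw [Nat.mul_add, hxx]
        exact Nat.eq_of_mul_eq_mul_left hq h2
      obtain ⟨hma, hea⟩ := lfc_spec hF hgr φ e q hq hgood ha j
      obtain ⟨hmb, heb⟩ := lfc_spec hF hgr φ e q hq hgood hb j'
      rw [hju, hjv, hea, heb]
      have hlevel : m + n + e * (i:ℤ) = (m + e * j) + (n + e * j') := by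
        rw [← hii]; push_cast; ring
      rw [rho_level_congr hlevel]
      exact rho_mul hgr (p := m + e * (j:ℤ)) (q := n + e * (j':ℤ)) hma hmb _
    · rw [if_neg hdvd]
      rw [rho_eq_zero_iff hgr]
      have h1 := hgood m a ha u
      have h2 := hgood n b hb v
      have h3 := hF.mul_mem h1 h2
      refine hF.mono ?_ h3
      have h4 := cdeg_strict hq hcop hdvd (v := v) (by rw [hxx]; exact ⟨i, rfl⟩)
      rw [hxx, cdeg_exact hq] at h4
      omega
  rw [Finset.sum_congr rfl (fun x _ => hval x)]
  rw [Finset.sum_attach (Finset.HasAntidiagonal.antidiagonal (q*i))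
    (fun x => if q ∣ x.1 then lfc ρ φ e q m a (x.1 / q) * lfc ρ φ e q n b (x.2 / q) else 0)]
  rw [← Finset.sum_filter]
  have hgoal : ∀ y ∈ Finset.HasAntidiagonal.antidiagonal i,
      (LF ρ φ e q m a).coeff y.1 * (LF ρ φ e q n b).coeff y.2
      = lfc ρ φ e q m a y.1 * lfc ρ φ e q n b y.2 := by
    intro y _
    rw [LF_coeff φ e q hq, LF_coeff φ e q hq]
  rw [Finset.sum_congr rfl hgoal]
  apply Finset.sum_nbij' (i := fun (x : ℕ × ℕ) => (x.1 / q, x.2 / q))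
    (j := fun (y : ℕ × ℕ) => (q * y.1, q * y.2))
  · intro x hx
    simp only [Finset.mem_filter, Finset.HasAntidiagonal.mem_antidiagonal] at hx
    obtain ⟨hsum, hdvd⟩ := hx
    have hdvd2 : q ∣ x.2 := by
      have h' : q ∣ x.1 + x.2 := by rw [hsum]; exact ⟨i, rfl⟩
      exact (Nat.dvd_add_iff_right hdvd).mpr h'
    obtain ⟨j, hj⟩ := hdvd
    obtain ⟨j', hj'⟩ := hdvd2
    simp only [Finset.HasAntidiagonal.mem_antidiagonal]
    rw [hj, hj', Nat.mul_div_cancel_left _ hq, Nat.mul_div_cancel_left _ hq]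
    have : q * (j + j') = q * i := by rw [Nat.mul_add, ← hj, ← hj', hsum]
    exact Nat.eq_of_mul_eq_mul_left hq this
  · intro y hy
    simp only [Finset.HasAntidiagonal.mem_antidiagonal] at hy
    simp only [Finset.mem_filter, Finset.HasAntidiagonal.mem_antidiagonal]
    exact ⟨by rw [← Nat.mul_add, hy], ⟨y.1, rfl⟩⟩
  · intro x hx
    simp only [Finset.mem_filter, Finset.HasAntidiagonal.mem_antidiagonal] at hx
    obtain ⟨hsum, hdvd⟩ := hx
    have hdvd2 : q ∣ x.2 := by
      have h' : q ∣ x.1 + x.2 := by rw [hsum]; exact ⟨i, rfl⟩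
      exact (Nat.dvd_add_iff_right hdvd).mpr h'
    obtain ⟨j, hj⟩ := hdvd
    obtain ⟨j', hj'⟩ := hdvd2
    have : x = (q * j, q * j') := Prod.ext hj hj'
    rw [this]
    simp [Nat.mul_div_cancel_left _ hq]
  · intro y hy
    simp [Nat.mul_div_cancel_left _ hq]
  · intro x hx
    simp only [Finset.mem_filter, Finset.HasAntidiagonal.mem_antidiagonal] at hx
    rfl
end
end DHML
set_option linter.unusedSectionVars false
set_option maxHeartbeats 1000000
namespace DHML
open Polynomial DirectSum

section
variable {k A G : Type*} [Field k] [CommRing A] [IsDomain A] [Algebra k A]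
  [CommRing G] [IsDomain G] [Algebra k G]
variable {F : ℤ → Submodule k A} {𝒜 : ℤ → Submodule k G} {ρ : ∀ n : ℤ, F n →ₗ[k] G}

noncomputable def pick (hgr : IsAssociatedGraded F 𝒜 ρ) (n : ℤ) (g : G) (hg : g ∈ 𝒜 n) :
    F n := (hgr.surjective n g hg).choose

lemma pick_spec (hgr : IsAssociatedGraded F 𝒜 ρ) (n : ℤ) (g : G) (hg : g ∈ 𝒜 n) :
    rho ρ n (pick hgr n g hg) (pick hgr n g hg).2 = g := by
  have := (hgr.surjective n g hg).choose_spec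
  rw [rho]
  convert this
  rfl

variable (hF : IsProperFiltration F) (hgr : IsAssociatedGraded F 𝒜 ρ)
  (φ : A →ₐ[k] Polynomial A) (e : ℤ) (q : ℕ) (hq : 0 < q)
  (hcop : e.natAbs.Coprime q)
  (hgood : ∀ (n : ℤ) (a : A), a ∈ F n → Good F (cdeg e q) n (φ a))

/-- the homogenized map on a graded piece. -/
noncomputable def Psip (n : ℤ) : 𝒜 n →ₗ[k] Polynomial G where
  toFun g := LF ρ φ e q n (pick hgr n g g.2)
  map_add' g g' := by
    show LF ρ φ e q n (pick hgr n (↑(g + g')) (g+g').2 : A)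
      = LF ρ φ e q n (pick hgr n g g.2 : A) + LF ρ φ e q n (pick hgr n g' g'.2 : A)
    set a := pick hgr n (↑(g + g')) (g+g').2 with hadef
    set b := pick hgr n g g.2
    set c' := pick hgr n g' g'.2
    have h1 : LF ρ φ e q n (a : A) = LF ρ φ e q n ((b : A) + (c' : A)) := by
      apply LF_congr hF hgr φ e q hq hgood a.2 (add_mem b.2 c'.2)
      rw [pick_spec hgr n _ (g+g').2,
        rho_add (ρ := ρ) b.2 c'.2 (add_mem b.2 c'.2),
        pick_spec hgr n _ g.2, pick_spec hgr n _ g'.2]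
      rfl
    rw [h1, LF_add hF hgr φ e q hq hgood b.2 c'.2]
  map_smul' t g := by
    show LF ρ φ e q n (pick hgr n (↑(t • g)) (t • g).2 : A)
      = t • LF ρ φ e q n (pick hgr n g g.2 : A)
    set a := pick hgr n (↑(t • g)) (t • g).2
    set b := pick hgr n g g.2
    have h1 : LF ρ φ e q n (a : A) = LF ρ φ e q n (t • (b : A)) := by
      apply LF_congr hF hgr φ e q hq hgood a.2 (Submodule.smul_mem _ t b.2)
      rw [pick_spec hgr n _ (t • g).2,
        rho_smul (ρ := ρ) t b.2 (Submodule.smul_mem _ t b.2),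
        pick_spec hgr n _ g.2]
      rfl
    rw [h1, LF_smul hF hgr φ e q hq hgood t b.2]

variable [GradedAlgebra 𝒜]

/-- the homogenized map, as a linear map. -/
noncomputable def psiLin : G →ₗ[k] Polynomial G :=
  (DirectSum.toModule k ℤ (Polynomial G) (Psip hF hgr φ e q hq hgood)).comp
    (DirectSum.decomposeAlgEquiv 𝒜).toLinearMap

lemma psiLin_apply {n : ℤ} {g : G} (hg : g ∈ 𝒜 n) :
    psiLin hF hgr φ e q hq hgood g = LF ρ φ e q n (pick hgr n g hg) := by
  rw [psiLin]
  simp only [LinearMap.comp_apply]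
  have hdec : (DirectSum.decomposeAlgEquiv 𝒜).toLinearMap g
      = DirectSum.lof k ℤ (fun i => 𝒜 i) n ⟨g, hg⟩ := by
    have := DirectSum.decompose_of_mem 𝒜 hg
    rw [DirectSum.lof_eq_of]
    exact this
  rw [hdec, DirectSum.toModule_lof]
  rfl

end
end DHML
set_option linter.unusedSectionVars false
set_option maxHeartbeats 1000000
namespace DHML
open Polynomial DirectSum

section
variable {k A G : Type*} [Field k] [CommRing A] [IsDomain A] [Algebra k A]
  [CommRing G] [IsDomain G] [Algebra k G]
variable {F : ℤ → Submodule k A} {𝒜 : ℤ → Submodule k G} {ρ : ∀ n : ℤ, F n →ₗ[k] G}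

variable (hF : IsProperFiltration F) (hgr : IsAssociatedGraded F 𝒜 ρ)
  (φ : A →ₐ[k] Polynomial A) (e : ℤ) (q : ℕ) (hq : 0 < q)
  (hcop : e.natAbs.Coprime q)
  (hgood : ∀ (n : ℤ) (a : A), a ∈ F n → Good F (cdeg e q) n (φ a))

include hF hgr hq hgood

lemma LF_of_phi_C {n : ℤ} {a : A} (ha : a ∈ F n) (h : φ a = C a) :
    LF ρ φ e q n a = C (rho ρ n a ha) := by
  ext m
  rw [LF_coeff φ e q hq]
  obtain ⟨h1, e1⟩ := lfc_spec hF hgr φ e q hq hgood ha m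
  rw [e1]
  rcases Nat.eq_zero_or_pos m with hm | hm
  · subst hm
    have hc : (φ a).coeff (q * 0) = a := by
      rw [Nat.mul_zero, h, coeff_C_zero]
    rw [rho_congr hc h1, coeff_C_zero]
    exact rho_level_congr (ρ := ρ) (show n + e * ((0:ℕ):ℤ) = n by push_cast; ring) _
  · have hc : (φ a).coeff (q * m) = 0 := by
      rw [h, coeff_C, if_neg (by positivity)]
    rw [rho_congr hc h1, rho_zero, coeff_C, if_neg (by omega)]

include hcop

variable [GradedAlgebra 𝒜]

lemma psiLin_one : psiLin hF hgr φ e q hq hgood (1 : G) = 1 := by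
  have h1 : (1:G) ∈ 𝒜 0 := SetLike.one_mem_graded 𝒜
  rw [psiLin_apply hF hgr φ e q hq hgood h1]
  set a := pick hgr 0 (1:G) h1
  have hcon : LF ρ φ e q 0 (a : A) = LF ρ φ e q 0 (1 : A) := by
    apply LF_congr hF hgr φ e q hq hgood a.2 hF.one_mem
    rw [pick_spec hgr 0 _ h1, rho, hgr.map_one]
  rw [hcon, LF_of_phi_C hF hgr φ e q hq hgood hF.one_mem (map_one φ ▸ (map_one C).symm),
    rho, hgr.map_one, map_one]

lemma psiLin_hommul {m n : ℤ} (gm : 𝒜 m) (gn : 𝒜 n) :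
    psiLin hF hgr φ e q hq hgood ((gm : G) * (gn : G))
      = psiLin hF hgr φ e q hq hgood (gm : G) * psiLin hF hgr φ e q hq hgood (gn : G) := by
  have hmem : (gm : G) * (gn : G) ∈ 𝒜 (m + n) := SetLike.mul_mem_graded gm.2 gn.2
  rw [psiLin_apply hF hgr φ e q hq hgood hmem,
    psiLin_apply hF hgr φ e q hq hgood gm.2,
    psiLin_apply hF hgr φ e q hq hgood gn.2]
  set a := pick hgr (m+n) _ hmem
  set b := pick hgr m (gm : G) gm.2
  set c' := pick hgr n (gn : G) gn.2
  have hcon : LF ρ φ e q (m+n) (a : A) = LF ρ φ e q (m+n) ((b : A) * (c' : A)) := by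
    apply LF_congr hF hgr φ e q hq hgood a.2 (hF.mul_mem b.2 c'.2)
    rw [pick_spec hgr (m+n) _ hmem,
      rho_mul hgr (p := m) (q := n) b.2 c'.2 (hF.mul_mem b.2 c'.2),
      pick_spec hgr m _ gm.2, pick_spec hgr n _ gn.2]
  rw [hcon, LF_mul hF hgr φ e q hq hcop hgood b.2 c'.2]

lemma psiLin_mul (x y : G) :
    psiLin hF hgr φ e q hq hgood (x * y)
      = psiLin hF hgr φ e q hq hgood x * psiLin hF hgr φ e q hq hgood y := by
  induction x using DirectSum.Decomposition.inductionOn 𝒜 with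
  | zero => rw [zero_mul, map_zero, zero_mul]
  | @homogeneous m gm =>
    induction y using DirectSum.Decomposition.inductionOn 𝒜 with
    | zero => rw [mul_zero, map_zero, mul_zero]
    | @homogeneous n gn => exact psiLin_hommul hF hgr φ e q hq hcop hgood gm gn
    | add y y' hy hy' => rw [mul_add, map_add, hy, hy', map_add, mul_add]
  | add x x' hx hx' => rw [add_mul, map_add, hx, hx', map_add, add_mul]

/-- the homogenized exponential map, as an algebra map. -/
noncomputable def psiAlg : G →ₐ[k] Polynomial G :=
  AlgHom.ofLinearMap (psiLin hF hgr φ e q hq hgood)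
    (psiLin_one hF hgr φ e q hq hcop hgood)
    (psiLin_mul hF hgr φ e q hq hcop hgood)

lemma psiAlg_apply {n : ℤ} {g : G} (hg : g ∈ 𝒜 n) :
    psiAlg hF hgr φ e q hq hcop hgood g = LF ρ φ e q n (pick hgr n g hg) :=
  psiLin_apply hF hgr φ e q hq hgood hg

end
end DHML
set_option linter.unusedSectionVars false
set_option maxHeartbeats 1000000
namespace DHML
open Polynomial DirectSum

section
variable {k A G : Type*} [Field k] [CommRing A] [IsDomain A] [Algebra k A]
  [CommRing G] [IsDomain G] [Algebra k G]
variable {F : ℤ → Submodule k A} {𝒜 : ℤ → Submodule k G} {ρ : ∀ n : ℤ, F n →ₗ[k] G}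

variable (hF : IsProperFiltration F) (hgr : IsAssociatedGraded F 𝒜 ρ)
  (φ : A →ₐ[k] Polynomial A) (hφ : IsExpMap φ) (e : ℤ) (q : ℕ) (hq : 0 < q)
  (hcop : e.natAbs.Coprime q)
  (hgood : ∀ (n : ℤ) (a : A), a ∈ F n → Good F (cdeg e q) n (φ a))
  [GradedAlgebra 𝒜]

include hF hgr hq hcop hgood

lemma psiAlg_coeff_mem {n : ℤ} {g : G} (hg : g ∈ 𝒜 n) (i : ℕ) :
    (psiAlg hF hgr φ e q hq hcop hgood g).coeff i ∈ 𝒜 (n + e * i) := by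
  rw [psiAlg_apply hF hgr φ e q hq hcop hgood hg, LF_coeff φ e q hq]
  exact lfc_mem hgr φ e q _ _ _

lemma psiAlg_invariant {n : ℤ} (a : F n) (hinv : φ (a : A) = C (a : A)) :
    psiAlg hF hgr φ e q hq hcop hgood (rho ρ n (a : A) a.2)
      = C (rho ρ n (a : A) a.2) := by
  have hg : rho ρ n (a : A) a.2 ∈ 𝒜 n := hgr.mem_piece n ⟨(a:A), a.2⟩
  rw [psiAlg_apply hF hgr φ e q hq hcop hgood hg]
  have hcon : LF ρ φ e q n (pick hgr n _ hg : A) = LF ρ φ e q n (a : A) := by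
    apply LF_congr hF hgr φ e q hq hgood (pick hgr n _ hg).2 a.2
    rw [pick_spec hgr n _ hg]
  rw [hcon, LF_of_phi_C hF hgr φ e q hq hgood a.2 hinv]

include hφ

lemma psiAlg_eval_zero (x : G) :
    (psiAlg hF hgr φ e q hq hcop hgood x).eval 0 = x := by
  induction x using DirectSum.Decomposition.inductionOn 𝒜 with
  | zero => rw [map_zero, eval_zero]
  | @homogeneous n g =>
    rw [psiAlg_apply hF hgr φ e q hq hcop hgood g.2, ← coeff_zero_eq_eval_zero,
      LF_coeff φ e q hq]
    set a := pick hgr n (g : G) g.2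
    obtain ⟨h1, e1⟩ := lfc_spec hF hgr φ e q hq hgood a.2 0
    rw [e1]
    have hc : (φ (a : A)).coeff (q * 0) = (a : A) := by
      rw [Nat.mul_zero, coeff_zero_eq_eval_zero, hφ.1]
    rw [rho_congr hc h1,
      rho_level_congr (ρ := ρ) (show n + e * ((0:ℕ):ℤ) = n by push_cast; ring) _]
    exact pick_spec hgr n _ g.2
  | add x y hx hy => rw [map_add, eval_add, hx, hy]

variable (hch : ∀ a b : ℕ, (((q*a).choose (q*b) : ℕ) : G) = ((a.choose b : ℕ) : G))

include hch

lemma psiAlg_coact_coeff {n : ℤ} (g : 𝒜 n) (j m : ℕ) :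
    (psiAlg hF hgr φ e q hq hcop hgood
        ((psiAlg hF hgr φ e q hq hcop hgood (g : G)).coeff j)).coeff m
      = (j+m).choose j • (psiAlg hF hgr φ e q hq hcop hgood (g : G)).coeff (j+m) := by
  set ψ := psiAlg hF hgr φ e q hq hcop hgood with hψ
  set a := pick hgr n (g : G) g.2 with hadef
  have hLF : ψ (g : G) = LF ρ φ e q n (a : A) :=
    psiAlg_apply hF hgr φ e q hq hcop hgood g.2
  -- identify the j-th coefficient
  have hGj : (ψ (g : G)).coeff j = lfc ρ φ e q n (a : A) j := by
    rw [hLF, LF_coeff φ e q hq]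
  obtain ⟨hmj, emj⟩ := lfc_spec hF hgr φ e q hq hgood a.2 j
  have hmemj : (ψ (g : G)).coeff j ∈ 𝒜 (n + e * j) := by
    rw [hGj]; exact lfc_mem hgr φ e q _ _ _
  rw [psiAlg_apply hF hgr φ e q hq hcop hgood hmemj]
  -- replace the pick by the explicit coefficient of φ a
  set b := (φ (a : A)).coeff (q * j) with hbdef
  have hbmem : b ∈ F (n + e * j) := hmj
  have hcon : LF ρ φ e q (n + e * j) (pick hgr _ _ hmemj : A)
      = LF ρ φ e q (n + e * j) b := by
    apply LF_congr hF hgr φ e q hq hgood (pick hgr _ _ hmemj).2 hbmem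
    rw [pick_spec hgr _ _ hmemj, hGj, emj]
  rw [hcon, LF_coeff φ e q hq]
  obtain ⟨hmm, emm⟩ := lfc_spec hF hgr φ e q hq hgood hbmem m
  rw [emm]
  -- use the coaction coefficient identity in A
  have hco : (φ b).coeff (q * m)
      = (q*j + q*m).choose (q*j) • (φ (a : A)).coeff (q*j + q*m) := by
    rw [hbdef]
    exact coact_coeff φ hφ (a : A) (q*j) (q*m)
  have hqjm : q*j + q*m = q * (j + m) := by ring
  obtain ⟨hmjm, emjm⟩ := lfc_spec hF hgr φ e q hq hgood a.2 (j + m)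
  have hmem2 : (q*(j+m)).choose (q*j) • (φ (a : A)).coeff (q * (j+m))
      ∈ F (n + e * j + e * m) := by
    exact nsmul_mem (hF.mono (le_of_eq (by push_cast; ring)) hmjm) _
  rw [rho_congr (by rw [hco, hqjm]) hmm]
  have hsm : rho ρ (n + e*j + e*m) ((q*(j+m)).choose (q*j) • (φ (a : A)).coeff (q * (j+m)))
      (by exact hmem2)
      = ((q*(j+m)).choose (q*j)) • rho ρ (n + e*j + e*m) ((φ (a : A)).coeff (q * (j+m)))
        (hF.mono (le_of_eq (by push_cast; ring)) hmjm) := by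
    exact rho_nsmul _ _ _
  rw [hsm]
  -- compare with the right-hand side
  have hRHS : (ψ (g : G)).coeff (j+m) = lfc ρ φ e q n (a : A) (j+m) := by
    rw [hLF, LF_coeff φ e q hq]
  rw [hRHS, emjm]
  rw [nsmul_eq_mul, nsmul_eq_mul]
  have hcast : (((q*(j+m)).choose (q*j) : ℕ) : G) = (((j+m).choose j : ℕ) : G) := hch (j+m) j
  rw [hcast]
  congr 1
  exact (rho_level_congr (ρ := ρ) (by push_cast; ring) _).symm

lemma psiAlg_coact (x : G) :
    (psiAlg hF hgr φ e q hq hcop hgood x).map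
        (psiAlg hF hgr φ e q hq hcop hgood).toRingHom
      = (psiAlg hF hgr φ e q hq hcop hgood x).eval₂
          ((C : Polynomial G →+* Polynomial (Polynomial G)).comp C) (X + C X) := by
  set ψ := psiAlg hF hgr φ e q hq hcop hgood with hψ
  induction x using DirectSum.Decomposition.inductionOn 𝒜 with
  | zero => rw [map_zero, Polynomial.map_zero, eval₂_zero]
  | @homogeneous n g =>
    ext j m
    rw [coeff_map, coeff_coeff_eval₂]
    exact psiAlg_coact_coeff hF hgr φ hφ e q hq hcop hgood hch g j m
  | add x y hx hy => rw [map_add, Polynomial.map_add, eval₂_add, hx, hy]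

end
end DHML
set_option linter.unusedSectionVars false
set_option maxHeartbeats 1000000
namespace DHML
open Polynomial

lemma coeff_one_add_Xq_pow {R : Type*} [CommRing R] (q : ℕ) (hq : 0 < q) (n b : ℕ) :
    ((1 + (X:R[X])^q)^n).coeff (q*b) = (n.choose b : R) := by
  rw [add_comm, add_pow, finset_sum_coeff]
  rw [Finset.sum_eq_single b]
  · rcases le_or_gt b n with hb | hb
    · rw [one_pow, mul_one, ← pow_mul, ← C_eq_natCast, coeff_mul_C, coeff_X_pow,
        if_pos rfl, one_mul]
    · simp [Nat.choose_eq_zero_of_lt hb]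
  · intro i _ hib
    rw [one_pow, mul_one, ← pow_mul, ← C_eq_natCast, coeff_mul_C, coeff_X_pow,
      if_neg (by
        intro h
        exact hib (Nat.eq_of_mul_eq_mul_left hq h.symm)), zero_mul]
  · intro hb
    rw [Finset.mem_range, not_lt] at hb
    simp [Nat.choose_eq_zero_of_lt (by omega : n < b)]

lemma choose_mul_pow_char {G : Type*} [CommRing G] (p : ℕ) [Fact p.Prime] [CharP G p]
    (s a b : ℕ) : (((p^s*a).choose (p^s*b) : ℕ) : G) = ((a.choose b : ℕ) : G) := by
  have hq : 0 < p^s := pow_pos (Fact.out (p := p.Prime)).pos s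
  have h1 : (((p^s*a).choose (p^s*b) : ℕ) : G)
      = ((X + 1 : G[X])^(p^s*a)).coeff (p^s*b) := by
    rw [coeff_X_add_one_pow]
  have h2 : ((X + 1 : G[X])^(p^s*a)) = (1 + (X:G[X])^(p^s))^a := by
    rw [add_comm, pow_mul, add_pow_char_pow]
    rw [one_pow]
  rw [h1, h2, coeff_one_add_Xq_pow _ hq]

lemma choose_ordProj_ne_zero {k : Type*} [Field k] (p : ℕ) [Fact p.Prime] [CharP k p]
    {N : ℕ} (hN : 0 < N) :
    ((N.choose (p ^ (N.factorization p)) : ℕ) : k) ≠ 0 := by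
  set t := N.factorization p
  set m := N / p^t with hm
  have hsplit : p^t * m = N := Nat.ordProj_mul_ordCompl_eq_self N p
  have hndvd : ¬ p ∣ m := Nat.not_dvd_ordCompl (Fact.out (p := p.Prime)) (by omega)
  have hq : 0 < p^t := pow_pos (Fact.out (p := p.Prime)).pos t
  have h1 : ((N.choose (p^t) : ℕ) : k) = ((X + 1 : k[X])^N).coeff (p^t) := by
    rw [coeff_X_add_one_pow]
  have h2 : ((X + 1 : k[X])^N) = (1 + (X:k[X])^(p^t))^m := by
    rw [← hsplit, add_comm, pow_mul, add_pow_char_pow, one_pow]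
  have h3 : ((1 + (X:k[X])^(p^t))^m).coeff (p^t * 1) = (m.choose 1 : k) :=
    coeff_one_add_Xq_pow _ hq m 1
  rw [mul_one] at h3
  rw [h1, h2, h3, Nat.choose_one_right]
  intro hcontra
  exact hndvd ((CharP.cast_eq_zero_iff k p m).mp hcontra)

end DHML
set_option linter.unusedSectionVars false
set_option maxHeartbeats 1000000
namespace DHML
open Polynomial

section
variable {k A G : Type*} [Field k] [CommRing A] [IsDomain A] [Algebra k A]
  [CommRing G] [IsDomain G] [Algebra k G]
variable {F : ℤ → Submodule k A} {𝒜 : ℤ → Submodule k G} {ρ : ∀ n : ℤ, F n →ₗ[k] G}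

variable (hF : IsProperFiltration F) (hgr : IsAssociatedGraded F 𝒜 ρ)
  (φ : A →ₐ[k] Polynomial A) (hφ : IsExpMap φ) (e : ℤ) (q : ℕ) (hq : 0 < q)
  (hcop : e.natAbs.Coprime q)
  (hgood : ∀ (n : ℤ) (a : A), a ∈ F n → Good F (cdeg e q) n (φ a))

include hF hgr hφ hq hcop hgood

lemma choose_vanish {g₀ : A} {i₀ : ℕ} (hg₀ : g₀ ≠ 0) (hi₀ : 0 < i₀) (hqd : q ∣ i₀)
    (hDex : cdeg e q i₀ = fdeg F ((φ g₀).coeff i₀) - fdeg F g₀)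
    (hcne : (φ g₀).coeff i₀ ≠ 0)
    {j : ℕ} (hj : ¬ q ∣ j) : ((i₀.choose j : ℕ) : k) = 0 := by
  by_contra hne
  have hji : j ≤ i₀ := by
    by_contra h
    push_neg at h
    exact hne (by rw [Nat.choose_eq_zero_of_lt h]; simp)
  set n₀ := fdeg F g₀ with hn₀
  have hg₀m : g₀ ∈ F n₀ := fdeg_mem hF hg₀
  set bj := (φ g₀).coeff j with hbj
  have hbjm : bj ∈ F (n₀ + cdeg e q j) := hgood n₀ g₀ hg₀m j
  have hco := coact_coeff φ hφ g₀ j (i₀ - j)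
  rw [show j + (i₀ - j) = i₀ by omega] at hco
  have hgood2 := hgood _ bj hbjm (i₀ - j)
  rw [hco] at hgood2
  have hstrict := cdeg_strict hq hcop hj (v := i₀ - j)
    (by rw [show j + (i₀ - j) = i₀ by omega]; exact hqd)
  rw [show j + (i₀ - j) = i₀ by omega] at hstrict
  have hmemlow : (i₀.choose j) • ((φ g₀).coeff i₀) ∈ F (n₀ + cdeg e q i₀ - 1) :=
    hF.mono (by omega) hgood2
  have hsmul : (i₀.choose j) • ((φ g₀).coeff i₀)
      = ((i₀.choose j : ℕ) : k) • ((φ g₀).coeff i₀) :=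
    (Nat.cast_smul_eq_nsmul k _ _).symm
  have hlow : (φ g₀).coeff i₀ ∈ F (n₀ + cdeg e q i₀ - 1) := by
    have h2 := Submodule.smul_mem _ (((i₀.choose j : ℕ) : k))⁻¹ hmemlow
    rw [hsmul, smul_smul, inv_mul_cancel₀ hne, one_smul] at h2
    exact h2
  have hDeq : n₀ + cdeg e q i₀ - 1 = fdeg F ((φ g₀).coeff i₀) - 1 := by omega
  rw [hDeq] at hlow
  exact fdeg_not_mem hF hcne hlow

end
end DHML
open DHML in
open Polynomial in
/-- Derksen–Hadas–Makar-Limanov homogenization: a non-trivial exponential map `φ`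
on an affine domain `A` with an admissible proper ℤ-filtration induces a
non-trivial homogeneous exponential map `ψ` on the associated graded domain, and
the leading form of any `φ`-invariant is `ψ`-invariant. -/
theorem exponential_map_homogenization
    {k A G : Type*} [Field k] [CommRing A] [IsDomain A] [Algebra k A]
    [Algebra.FiniteType k A] [CommRing G] [IsDomain G] [Algebra k G]
    (F : ℤ → Submodule k A) (hF : IsProperFiltration F)
    (hadm : IsAdmissibleFiltration F)
    (𝒜 : ℤ → Submodule k G) [GradedAlgebra 𝒜]
    (ρ : ∀ n : ℤ, F n →ₗ[k] G) (hgr : IsAssociatedGraded F 𝒜 ρ)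
    (φ : A →ₐ[k] Polynomial A) (hφ : IsExpMap φ) (hnt : ∃ b, φ b ≠ C b) :
    ∃ ψ : G →ₐ[k] Polynomial G,
      IsExpMap ψ ∧ (∃ c, ψ c ≠ C c) ∧
      (∃ d : ℤ, ∀ (n : ℤ), ∀ g ∈ 𝒜 n, ∀ i : ℕ, (ψ g).coeff i ∈ 𝒜 (n - d * i)) ∧
      (∀ (n : ℤ) (a : F n), (a : A) ∉ F (n - 1) → φ (a : A) = C (a : A) →
        ψ (ρ n a) = C (ρ n a)) := by
  classical
  obtain ⟨s, hstop, hsp⟩ := hadm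
  -- not all generators are φ-invariant
  have hex : ∃ g ∈ s, φ g ≠ C g := by
    by_contra hall
    push_neg at hall
    obtain ⟨b, hb⟩ := hnt
    apply hb
    have hle : Algebra.adjoin k (s : Set A) ≤ AlgHom.equalizer φ (CAlgHom (R := k)) := by
      apply Algebra.adjoin_le
      intro g hg
      exact hall g hg
    rw [hstop] at hle
    exact hle (Algebra.mem_top)
  -- the finite set of relevant (generator, index) pairs
  set B := s.sup (fun g => (φ g).natDegree) with hB
  set T : Finset (A × ℕ) := (s ×ˢ Finset.range (B+1)).filter
      (fun x => 1 ≤ x.2 ∧ (φ x.1).coeff x.2 ≠ 0) with hT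
  have hTmem : ∀ g i, ((g,i) ∈ T ↔ g ∈ s ∧ 1 ≤ i ∧ (φ g).coeff i ≠ 0) := by
    intro g i
    constructor
    · intro h
      simp only [hT, Finset.mem_filter, Finset.mem_product] at h
      exact ⟨h.1.1, h.2⟩
    · rintro ⟨h1, h2, h3⟩
      simp only [hT, Finset.mem_filter, Finset.mem_product, Finset.mem_range]
      refine ⟨⟨h1, ?_⟩, h2, h3⟩
      have hd1 := le_natDegree_of_ne_zero h3
      have hd2 : (φ g).natDegree ≤ B := Finset.le_sup (f := fun g => (φ g).natDegree) h1
      omega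
  have hTne : T.Nonempty := by
    obtain ⟨g, hgs, hgne⟩ := hex
    have hexi : ∃ i, 1 ≤ i ∧ (φ g).coeff i ≠ 0 := by
      by_contra hno
      push_neg at hno
      apply hgne
      ext i
      rcases Nat.eq_zero_or_pos i with h0 | h0
      · subst h0
        rw [coeff_zero_eq_eval_zero, hφ.1, coeff_C_zero]
      · rw [hno i h0, coeff_C, if_neg (by omega)]
    obtain ⟨i, hi1, hi2⟩ := hexi
    exact ⟨(g,i), (hTmem g i).2 ⟨hgs, hi1, hi2⟩⟩
  -- maximize the slope
  obtain ⟨x₀, hx₀T, hx₀max⟩ := Finset.exists_max_image T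
    (fun x => ((fdeg F ((φ x.1).coeff x.2) - fdeg F x.1 : ℤ) : ℚ) / (x.2 : ℚ)) hTne
  obtain ⟨g₀, i₀⟩ := x₀
  obtain ⟨hg₀s, hi₀pos, hc₀ne⟩ := (hTmem g₀ i₀).1 hx₀T
  have hg₀ne : g₀ ≠ 0 := by
    intro h
    apply hc₀ne
    rw [h, map_zero, coeff_zero]
  set Δ₀ : ℤ := fdeg F ((φ g₀).coeff i₀) - fdeg F g₀ with hΔ₀
  set gst := Nat.gcd Δ₀.natAbs i₀ with hgst
  have hgstpos : 0 < gst := Nat.gcd_pos_of_pos_right _ hi₀pos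
  set q := i₀ / gst with hqdef
  set e := Δ₀ / (gst : ℤ) with hedef
  have hgd : gst ∣ i₀ := Nat.gcd_dvd_right _ _
  have hqpos : 0 < q := Nat.div_pos (Nat.le_of_dvd hi₀pos hgd) hgstpos
  have hι : i₀ = q * gst := by
    rw [hqdef, Nat.div_mul_cancel hgd]
  have hgdZ : (gst : ℤ) ∣ Δ₀ := by
    rw [← Int.natAbs_dvd_natAbs, Int.natAbs_natCast]
    exact Nat.gcd_dvd_left _ _
  have heΔ : (gst : ℤ) * e = Δ₀ := Int.mul_ediv_cancel' hgdZ
  have hcop : e.natAbs.Coprime q := by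
    have habs : Δ₀.natAbs = gst * e.natAbs := by
      rw [← heΔ, Int.natAbs_mul, Int.natAbs_natCast]
    have he' : e.natAbs = Δ₀.natAbs / gst := by
      rw [habs, Nat.mul_div_cancel_left _ hgstpos]
    rw [he', hqdef, hgst]
    exact Nat.coprime_div_gcd_div_gcd hgstpos
  -- the key slope inequality
  have hkey : ∀ x ∈ T, (fdeg F ((φ x.1).coeff x.2) - fdeg F x.1) * q ≤ e * x.2 := by
    rintro ⟨x1, x2⟩ hx
    have hv := hx₀max (x1, x2) hx
    dsimp only at hv ⊢
    have hx2pos : 0 < x2 := by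
      obtain ⟨_, h2, _⟩ := (hTmem x1 x2).1 hx
      omega
    rw [div_le_div_iff₀ (by exact_mod_cast hx2pos) (by exact_mod_cast hi₀pos)] at hv
    have hvz : (fdeg F ((φ x1).coeff x2) - fdeg F x1) * (i₀ : ℤ) ≤ Δ₀ * (x2 : ℤ) := by
      exact_mod_cast hv
    have hmul : ((fdeg F ((φ x1).coeff x2) - fdeg F x1) * q) * (gst : ℤ)
        ≤ (e * x2) * (gst : ℤ) := by
      calc ((fdeg F ((φ x1).coeff x2) - fdeg F x1) * q) * (gst : ℤ)
          = (fdeg F ((φ x1).coeff x2) - fdeg F x1) * (i₀ : ℤ) := by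
            rw [hι]; push_cast; ring
        _ ≤ Δ₀ * (x2 : ℤ) := hvz
        _ = (e * x2) * (gst : ℤ) := by rw [← heΔ]; ring
    exact le_of_mul_le_mul_right hmul (by exact_mod_cast hgstpos)
  -- the degree bound for generators
  have hgen : ∀ g : (s : Set A), (g : A) ≠ 0 →
      Good F (cdeg e q) (fdeg F (g : A)) (φ (g : A)) := by
    intro g hgne i
    rcases Nat.eq_zero_or_pos i with h0 | h0
    · subst h0
      have hc : (φ (g:A)).coeff 0 = (g:A) := by
        rw [coeff_zero_eq_eval_zero, hφ.1]
      rw [hc, cdeg_zero, add_zero]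
      exact fdeg_mem hF hgne
    · by_cases hz : (φ (g:A)).coeff i = 0
      · rw [hz]; exact zero_mem _
      · have hgsmem : (g : A) ∈ s := g.2
        have hmemT : ((g:A), i) ∈ T := (hTmem _ i).2 ⟨hgsmem, h0, hz⟩
        have hk2 := hkey _ hmemT
        dsimp only at hk2
        have hle := le_cdeg hqpos (e := e) (i := i) hk2
        exact mem_of_fdeg_le hF hz (by omega)
  have hgood : ∀ (n : ℤ) (a : A), a ∈ F n → Good F (cdeg e q) n (φ a) :=
    fun n a ha => good_main hF hgr φ (cdeg_zero e q) (cdeg_superadd hqpos) s hsp hgen ha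
  -- exactness at the maximizer
  have hDex : cdeg e q i₀ = Δ₀ := by
    rw [hι, cdeg_exact hqpos, mul_comm]
    exact heΔ
  have hqi : q ∣ i₀ := ⟨gst, hι⟩
  have hvanish : ∀ j : ℕ, ¬ q ∣ j → ((i₀.choose j : ℕ) : k) = 0 := by
    intro j hj
    exact choose_vanish hF hgr φ hφ e q hqpos hcop hgood hg₀ne hi₀pos hqi
      (by rw [hDex]) hc₀ne hj
  -- the binomial congruence needed for the coaction
  have hch : ∀ a b : ℕ, (((q*a).choose (q*b) : ℕ) : G) = ((a.choose b : ℕ) : G) := by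
    rcases CharP.char_is_prime_or_zero k (ringChar k) with hp | h0
    · haveI : Fact (ringChar k).Prime := ⟨hp⟩
      haveI : CharP G (ringChar k) :=
        charP_of_injective_ringHom (algebraMap k G).injective (ringChar k)
      have hqpow : ∃ s', q = (ringChar k)^s' := by
        have hdvd : q ∣ (ringChar k) ^ (i₀.factorization (ringChar k)) := by
          by_contra hnd
          exact choose_ordProj_ne_zero (ringChar k) hi₀pos (hvanish _ hnd)
        obtain ⟨s', _, hs'⟩ := (Nat.dvd_prime_pow hp).mp hdvd
        exact ⟨s', hs'⟩
      obtain ⟨s', hqe⟩ := hqpow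
      intro a b
      rw [hqe]
      exact choose_mul_pow_char (ringChar k) s' a b
    · haveI : CharP k 0 := h0 ▸ ringChar.charP k
      haveI : CharZero k := CharP.charP_to_charZero k
      have hq1 : q = 1 := by
        by_contra hne1
        have hq2 : 2 ≤ q := by omega
        have hjnd : ¬ q ∣ (i₀ - 1) := by
          intro hdvd
          have h1 : q ∣ i₀ - (i₀ - 1) := Nat.dvd_sub hqi hdvd
          rw [show i₀ - (i₀ - 1) = 1 by omega] at h1
          have := Nat.le_of_dvd (by omega) h1
          omega
        have hvv := hvanish _ hjnd
        have hcs : i₀.choose (i₀ - 1) = i₀ := by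
          have h1 := Nat.choose_symm (show i₀ - 1 ≤ i₀ by omega)
          rw [show i₀ - (i₀ - 1) = 1 by omega, Nat.choose_one_right] at h1
          omega
        rw [hcs] at hvv
        exact (Nat.cast_ne_zero.mpr (by omega : i₀ ≠ 0)) hvv
      intro a b
      rw [hq1, one_mul, one_mul]
  -- assemble the homogenized exponential map
  refine ⟨psiAlg hF hgr φ e q hqpos hcop hgood,
    ⟨psiAlg_eval_zero hF hgr φ hφ e q hqpos hcop hgood,
      psiAlg_coact hF hgr φ hφ e q hqpos hcop hgood hch⟩, ?_, ⟨-e, ?_⟩, ?_⟩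
  · -- non-triviality
    set n₀ := fdeg F g₀ with hn₀
    have hg₀m : g₀ ∈ F n₀ := fdeg_mem hF hg₀ne
    refine ⟨rho ρ n₀ g₀ hg₀m, ?_⟩
    have hgmem : rho ρ n₀ g₀ hg₀m ∈ 𝒜 n₀ := hgr.mem_piece _ _
    rw [psiAlg_apply hF hgr φ e q hqpos hcop hgood hgmem]
    intro hCeq
    have hcon : LF ρ φ e q n₀ (pick hgr n₀ _ hgmem : A) = LF ρ φ e q n₀ g₀ := by
      apply LF_congr hF hgr φ e q hqpos hgood (pick hgr n₀ _ hgmem).2 hg₀m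
      rw [pick_spec hgr n₀ _ hgmem]
    rw [hcon] at hCeq
    have h1 : (LF ρ φ e q n₀ g₀).coeff gst ≠ 0 := by
      rw [LF_coeff φ e q hqpos]
      obtain ⟨hm, em⟩ := lfc_spec hF hgr φ e q hqpos hgood hg₀m gst
      rw [em, Ne, rho_eq_zero_iff hgr]
      intro hmem
      apply fdeg_not_mem hF hc₀ne
      have hlevel : n₀ + e * (gst:ℤ) - 1 = fdeg F ((φ g₀).coeff i₀) - 1 := by
        have h2 : e * (gst:ℤ) = Δ₀ := by rw [mul_comm]; exact heΔ
        omega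
      rw [← hlevel]
      rw [← hι] at hmem
      exact hmem
    rw [hCeq] at h1
    apply h1
    rw [coeff_C, if_neg (by omega : gst ≠ 0)]
  · -- homogeneity with weight d = -e
    intro n g hg i
    have hmm := psiAlg_coeff_mem hF hgr φ e q hqpos hcop hgood hg i
    have : n - (-e) * (i:ℤ) = n + e * i := by ring
    rw [this]
    exact hmm
  · -- invariance of leading forms of invariants
    intro n a hnot hinv
    exact psiAlg_invariant hF hgr φ e q hqpos hcop hgood a hinv
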